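/- Under the setting of the per-step bound — E, W real inner product spaces; R : E → ℝ with L-Lipschitz gradient (L > 0) and ‖∇R‖ ≤ σ; 𝓛 : E × W → ℝ with ‖∇_θ𝓛‖ ≤ σ, mixed derivative bound σ′, and w ↦ R(F(θ, w)) having L-Lipschitz gradient for each θ; F(θ, w) = θ − μ·∇_θ𝓛(θ; w); updates θ_{t+1} = F(θ_t, w_{t+1}) and w_{t+1} = w_t − α·∇_w R(F(θ_t, w_t)) — let T ≥ 2 be an integer and set the step sizes α = k₁/√T with 0 < k₁ < 2/L and μ = k₂/T with k₂ > 0. Then the smallest squared outer-gradient norm over the first T steps satisfies: min_{1 ≤ t ≤ T} ‖∇_w R(F(θ_t, w_t))‖² ≤ (R(θ₁) − R(θ_{T+1}))/(k₁·(√T − 1)) + (σ·k₂/(k₁·(√T − 1)))·(3·σ + (9/2)·L·μ·σ + 2·α·μ·σ·σ′²). -/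

import Mathlib

open RealInnerProductSpace

lemma descent_lemma_aux {V : Type*} [NormedAddCommGroup V] [InnerProductSpace ℝ V]
    (g : V → ℝ) (g' : V → V) (L : ℝ)
    (hdiff : ∀ x, HasFDerivAt g (innerSL ℝ (g' x)) x)
    (hlip : ∀ x y, ‖g' x - g' y‖ ≤ L * ‖x - y‖)
    (x y : V) :
    g y ≤ g x + ⟪g' x, y - x⟫ + L / 2 * ‖y - x‖ ^ 2 := by
  set d := y - x with hd
  have hline : ∀ t : ℝ, HasDerivAt (fun t : ℝ => x + t • d) d t := by
    intro t
    simpa using ((hasDerivAt_id t).smul_const d).const_add x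
  set ψ : ℝ → ℝ := fun t => g (x + t • d) - t * ⟪g' x, d⟫ - L / 2 * t ^ 2 * ‖d‖ ^ 2 with hψdef
  have hψ : ∀ t : ℝ, HasDerivAt ψ
      (⟪g' (x + t • d), d⟫ - ⟪g' x, d⟫ - L / 2 * (2 * t) * ‖d‖ ^ 2) t := by
    intro t
    have h1 : HasDerivAt (fun t : ℝ => g (x + t • d)) (⟪g' (x + t • d), d⟫) t := by
      exact (hdiff (x + t • d)).comp_hasDerivAt t (hline t)
    have h2 : HasDerivAt (fun t : ℝ => t * ⟪g' x, d⟫) (⟪g' x, d⟫) t := by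
      simpa using (hasDerivAt_id t).mul_const (⟪g' x, d⟫)
    have h3 : HasDerivAt (fun t : ℝ => L / 2 * t ^ 2 * ‖d‖ ^ 2) (L / 2 * (2 * t) * ‖d‖ ^ 2) t := by
      have hp : HasDerivAt (fun t : ℝ => t ^ 2) (2 * t) t := by
        simpa using hasDerivAt_pow 2 t
      have := (hp.const_mul (L / 2)).mul_const (‖d‖ ^ 2)
      simpa [mul_comm, mul_assoc, mul_left_comm] using this
    exact (h1.sub h2).sub h3
  have hcont : Continuous ψ :=
    continuous_iff_continuousAt.2 fun t => (hψ t).differentiableAt.continuousAt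
  have hanti : AntitoneOn ψ (Set.Icc (0:ℝ) 1) := by
    apply antitoneOn_of_deriv_nonpos (convex_Icc 0 1) hcont.continuousOn
    · intro t ht
      exact (hψ t).differentiableAt.differentiableWithinAt
    · intro t ht
      rw [interior_Icc] at ht
      rw [(hψ t).deriv]
      have h4 : ⟪g' (x + t • d) - g' x, d⟫ ≤ ‖g' (x + t • d) - g' x‖ * ‖d‖ :=
        real_inner_le_norm _ _
      have h5 : ‖g' (x + t • d) - g' x‖ ≤ L * (t * ‖d‖) := by
        have := hlip (x + t • d) x
        simpa [norm_smul, abs_of_nonneg ht.1.le] using this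
      rw [inner_sub_left] at h4
      nlinarith [norm_nonneg d, norm_nonneg (g' (x + t • d) - g' x), ht.1]
  have h01 : ψ 1 ≤ ψ 0 :=
    hanti (Set.mem_Icc.2 ⟨le_refl 0, zero_le_one⟩) (Set.mem_Icc.2 ⟨zero_le_one, le_refl 1⟩)
      zero_le_one
  have hy : x + (1:ℝ) • d = y := by rw [hd]; simp
  simp only [hψdef, hy, one_smul, zero_smul, add_zero, one_pow, zero_pow, one_mul, zero_mul,
    mul_zero, sub_zero, mul_one] at h01
  have hxy : x + d = y := by rw [hd]; abel
  rw [hxy] at h01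
  nlinarith [h01]


set_option maxHeartbeats 1000000 in
/-- The final estimate in the proof of Theorem 2 (Convergence rate): with step sizes
`α = k₁ / √T` (`0 < k₁ < 2/L`) and `μ = k₂ / T` (`k₂ > 0`), the smallest squared
outer-gradient norm over the first `T` steps satisfies
`min_{1 ≤ t ≤ T} ‖∇_w R(F(θ_t, w_t))‖²
  ≤ (R θ₁ - R θ_{T+1}) / (k₁ (√T - 1))
    + (σ k₂ / (k₁ (√T - 1))) (3 σ + (9/2) L μ σ + 2 α μ σ σ'²)`. -/
theorem convergence_rate_bound
    {E W : Type*} [NormedAddCommGroup E] [InnerProductSpace ℝ E]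
    [NormedAddCommGroup W] [InnerProductSpace ℝ W]
    (R : E → ℝ) (R' : E → E) (L σ σ' : ℝ) (hL : 0 < L)
    (hRdiff : ∀ x, HasFDerivAt R (innerSL ℝ (R' x)) x)
    (hRlip : ∀ x y, ‖R' x - R' y‖ ≤ L * ‖x - y‖)
    (hRbound : ∀ x, ‖R' x‖ ≤ σ)
    (𝓛 : E → W → ℝ) (𝓛' : E → W → E)
    (h𝓛diff : ∀ θ₀ w₀, HasFDerivAt (fun θ => 𝓛 θ w₀) (innerSL ℝ (𝓛' θ₀ w₀)) θ₀)
    (h𝓛bound : ∀ θ₀ w₀, ‖𝓛' θ₀ w₀‖ ≤ σ)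
    (D : E → W → (W →L[ℝ] E))
    (hD : ∀ θ₀ w₀, HasFDerivAt (fun w => 𝓛' θ₀ w) (D θ₀ w₀) w₀)
    (hDbound : ∀ θ₀ w₀, ‖D θ₀ w₀‖ ≤ σ')
    (μ : ℝ)
    (F : E → W → E) (hF : ∀ θ₀ w₀, F θ₀ w₀ = θ₀ - μ • 𝓛' θ₀ w₀)
    (G : E → W → W)
    (hG : ∀ θ₀ w₀, HasFDerivAt (fun w => R (F θ₀ w)) (innerSL ℝ (G θ₀ w₀)) w₀)
    (hGlip : ∀ θ₀ w₁ w₂, ‖G θ₀ w₁ - G θ₀ w₂‖ ≤ L * ‖w₁ - w₂‖)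
    (θ : ℕ → E) (w : ℕ → W) (α : ℝ)
    (hθupd : ∀ t, θ (t + 1) = F (θ t) (w (t + 1)))
    (hwupd : ∀ t, w (t + 1) = w t - α • G (θ t) (w t))
    (T : ℕ) (hT : 2 ≤ T)
    (k₁ k₂ : ℝ) (hk₁ : 0 < k₁) (hk₁L : k₁ < 2 / L) (hk₂ : 0 < k₂)
    (hα : α = k₁ / Real.sqrt T) (hμ : μ = k₂ / T) :
    (Finset.Icc 1 T).inf' (Finset.nonempty_Icc.mpr (by omega))
        (fun t => ‖G (θ t) (w t)‖ ^ 2) ≤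
      (R (θ 1) - R (θ (T + 1))) / (k₁ * (Real.sqrt T - 1)) +
        (σ * k₂ / (k₁ * (Real.sqrt T - 1))) *
          (3 * σ + (9 / 2) * L * μ * σ + 2 * α * μ * σ * σ' ^ 2) := by
  have hσ : 0 ≤ σ := le_trans (norm_nonneg _) (hRbound 0)
  have hT2 : (2:ℝ) ≤ (T:ℝ) := by exact_mod_cast hT
  have hT0 : (0:ℝ) < (T:ℝ) := by linarith
  have hs0 : 0 < Real.sqrt T := Real.sqrt_pos.2 hT0
  have hs2 : Real.sqrt T ^ 2 = (T:ℝ) := Real.sq_sqrt hT0.le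
  have hs1 : 1 < Real.sqrt T := by nlinarith [hs0]
  have hμ0 : 0 < μ := by rw [hμ]; positivity
  have hα0 : 0 < α := by rw [hα]; positivity
  -- R is σ-Lipschitz
  have hRLip1 : ∀ a b : E, R a - R b ≤ σ * ‖a - b‖ := by
    intro a b
    have h := Convex.norm_image_sub_le_of_norm_hasFDerivWithin_le
      (f := R) (f' := fun x => innerSL ℝ (R' x)) (C := σ) (s := Set.univ)
      (fun x _ => (hRdiff x).hasFDerivWithinAt)
      (fun x _ => by simpa [innerSL_apply_norm] using hRbound x)
      convex_univ (Set.mem_univ b) (Set.mem_univ a)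
    rw [Real.norm_eq_abs] at h
    calc R a - R b ≤ |R a - R b| := le_abs_self _
      _ ≤ σ * ‖a - b‖ := h
  set c : ℝ := α - L * α ^ 2 / 2 with hc
  -- per-step bound
  have step : ∀ t, R (θ (t + 1)) ≤ R (θ t) + μ * σ ^ 2 - c * ‖G (θ t) (w t)‖ ^ 2 := by
    intro t
    have hdesc := descent_lemma_aux (fun v => R (F (θ t) v)) (G (θ t)) L
      (hG (θ t)) (hGlip (θ t)) (w t) (w (t + 1))
    have hwdiff : w (t + 1) - w t = -(α • G (θ t) (w t)) := by rw [hwupd t]; abel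
    rw [hwdiff] at hdesc
    have hinner : ⟪G (θ t) (w t), -(α • G (θ t) (w t))⟫ = -(α * ‖G (θ t) (w t)‖ ^ 2) := by
      rw [inner_neg_right, real_inner_smul_right, real_inner_self_eq_norm_sq]
    have hnorm : ‖-(α • G (θ t) (w t))‖ ^ 2 = α ^ 2 * ‖G (θ t) (w t)‖ ^ 2 := by
      rw [norm_neg, norm_smul, mul_pow, Real.norm_eq_abs, sq_abs]
    rw [hinner, hnorm] at hdesc
    have h1 : R (F (θ t) (w t)) ≤ R (θ t) + μ * σ ^ 2 := by
      have h2 := hRLip1 (F (θ t) (w t)) (θ t)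
      have hFn : ‖F (θ t) (w t) - θ t‖ = μ * ‖𝓛' (θ t) (w t)‖ := by
        rw [hF, sub_sub_cancel_left, norm_neg, norm_smul, Real.norm_eq_abs, abs_of_pos hμ0]
      rw [hFn] at h2
      have h𝓛 := h𝓛bound (θ t) (w t)
      nlinarith [mul_nonneg (mul_nonneg hσ hμ0.le) (sub_nonneg.2 h𝓛)]
    rw [hθupd t, hc]
    linarith [hdesc, h1]
  -- summed bound
  have key : ∀ n : ℕ, R (θ (n + 1)) + c * ∑ t ∈ Finset.Icc 1 n, ‖G (θ t) (w t)‖ ^ 2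
      ≤ R (θ 1) + (n : ℝ) * (μ * σ ^ 2) := by
    intro n
    induction n with
    | zero => simp
    | succ n ih =>
      rw [Finset.sum_Icc_succ_top (by omega : 1 ≤ n + 1)]
      have hst := step (n + 1)
      push_cast
      push_cast at ih
      linarith [ih, hst]
  set m : ℝ := (Finset.Icc 1 T).inf' (Finset.nonempty_Icc.mpr (by omega))
      (fun t => ‖G (θ t) (w t)‖ ^ 2) with hm
  have hm0 : 0 ≤ m := Finset.le_inf' _ _ (fun t _ => by positivity)
  have hsum : (T:ℝ) * m ≤ ∑ t ∈ Finset.Icc 1 T, ‖G (θ t) (w t)‖ ^ 2 := by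
    have h := Finset.card_nsmul_le_sum (Finset.Icc 1 T)
      (fun t => ‖G (θ t) (w t)‖ ^ 2) m (fun t ht => Finset.inf'_le _ ht)
    simpa [Nat.card_Icc, nsmul_eq_mul] using h
  have hLk : L * k₁ < 2 := by
    have h := (lt_div_iff₀ hL).mp hk₁L
    linarith
  have hLα : L * α < 2 := by
    have h1 : L * α = L * k₁ / Real.sqrt T := by rw [hα]; ring
    have h2 : L * k₁ / Real.sqrt T ≤ L * k₁ :=
      div_le_self (by positivity) hs1.le
    linarith [h1 ▸ h2]
  have hc0 : 0 < c := by
    rw [hc]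
    nlinarith [mul_pos hα0 (by linarith : (0:ℝ) < 2 - L * α)]
  have hTμ : (T:ℝ) * μ = k₂ := by rw [hμ]; field_simp
  set Dd : ℝ := k₁ * (Real.sqrt T - 1) with hDd
  have hDd0 : 0 < Dd := by rw [hDd]; nlinarith
  have hcT : Dd ≤ c * T := by
    have h1 : α * (T:ℝ) = k₁ * Real.sqrt T := by
      rw [hα, div_mul_eq_mul_div, div_eq_iff (ne_of_gt hs0), mul_assoc,
        Real.mul_self_sqrt hT0.le]
    have h2 : α ^ 2 * (T:ℝ) = k₁ ^ 2 := by
      rw [hα, div_pow, hs2, div_mul_cancel₀ _ (ne_of_gt hT0)]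
    have hLk2 : L * k₁ ^ 2 / 2 ≤ k₁ := by nlinarith
    rw [hDd, hc]
    nlinarith [h1, h2, hLk2, hs1]
  have hA : m * Dd ≤ (R (θ 1) - R (θ (T + 1))) +
      σ * k₂ * (3 * σ + (9 / 2) * L * μ * σ + 2 * α * μ * σ * σ' ^ 2) := by
    have h1 := key T
    have h2 : c * ((T:ℝ) * m) ≤ c * ∑ t ∈ Finset.Icc 1 T, ‖G (θ t) (w t)‖ ^ 2 :=
      mul_le_mul_of_nonneg_left hsum hc0.le
    have h3 : (T:ℝ) * (μ * σ ^ 2) = k₂ * σ ^ 2 := by rw [← mul_assoc, hTμ]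
    have h4 : k₂ * σ ^ 2 ≤ σ * k₂ * (3 * σ + (9 / 2) * L * μ * σ + 2 * α * μ * σ * σ' ^ 2) := by
      nlinarith [mul_nonneg hk₂.le (sq_nonneg σ),
        mul_nonneg (mul_nonneg (mul_nonneg hL.le hμ0.le) (sq_nonneg σ)) hk₂.le,
        mul_nonneg (mul_nonneg (mul_nonneg (mul_nonneg hα0.le hμ0.le) (sq_nonneg σ)) (sq_nonneg σ')) hk₂.le]
    have h5 : m * Dd ≤ m * (c * T) := mul_le_mul_of_nonneg_left hcT hm0
    nlinarith [h1, h2, h3, h4, h5]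
  have heq : (R (θ 1) - R (θ (T + 1))) / Dd +
      (σ * k₂ / Dd) * (3 * σ + (9 / 2) * L * μ * σ + 2 * α * μ * σ * σ' ^ 2) =
      ((R (θ 1) - R (θ (T + 1))) +
        σ * k₂ * (3 * σ + (9 / 2) * L * μ * σ + 2 * α * μ * σ * σ' ^ 2)) / Dd := by
    field_simp
  rw [heq]
  exact (le_div_iff₀ hDd0).mpr hA
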